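/- arXiv:1111.4995 — 3 statements merged into one kernel-verified Lean document; each statement's English description precedes it below -/
import Mathlib

section
/- Let G be a topological group with a neighborhood basis 𝒩 of the identity consisting of open subgroups, and let L = {V·A : A ⊆ G, V ∈ 𝒩}. For ultrafilters u, v on G, define u* to be the filter generated by {V·A : A ∈ u, V ∈ 𝒩}, and define u ∼ v iff u* = v*. Then u ∼ v if and only if u ∩ L = v ∩ L (as ultrafilters on the Boolean algebra L). -/
open Pointwise

lemma aux_VVA {G : Type*} [Group G] (V : Subgroup G) (A : Set G) :
    (V : Set G) * ((V : Set G) * A) = (V : Set G) * A := by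
  rw [← mul_assoc, coe_mul_coe]

/-- For ultrafilters `u, v` on `G`, with `u*` the filter generated by
`{V·A : A ∈ u, V ∈ 𝒩}`, we have `u* = v*` iff `u` and `v` have the same trace on the
Boolean algebra `L = {V·A : A ⊆ G, V ∈ 𝒩}`. -/
theorem stmt_1 {G : Type*} [Group G] [TopologicalSpace G] [IsTopologicalGroup G]
    (𝒩 : Set (Subgroup G)) (hopen : ∀ V ∈ 𝒩, IsOpen (V : Set G))
    (hbasis : (nhds (1 : G)).HasBasis (· ∈ 𝒩) (fun V => (V : Set G)))
    (u v : Ultrafilter G) :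
    Filter.generate {S : Set G | ∃ V ∈ 𝒩, ∃ A ∈ u, S = (V : Set G) * A} =
        Filter.generate {S : Set G | ∃ V ∈ 𝒩, ∃ A ∈ v, S = (V : Set G) * A} ↔
      {S : Set G | (∃ V ∈ 𝒩, ∃ A : Set G, S = (V : Set G) * A) ∧ S ∈ u} =
        {S : Set G | (∃ V ∈ 𝒩, ∃ A : Set G, S = (V : Set G) * A) ∧ S ∈ v} := by
  have key : ∀ w w' : Ultrafilter G,
      Filter.generate {S : Set G | ∃ V ∈ 𝒩, ∃ A ∈ w, S = (V : Set G) * A} ≤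
        Filter.generate {S : Set G | ∃ V ∈ 𝒩, ∃ A ∈ w', S = (V : Set G) * A} →
      ∀ S : Set G, (∃ V ∈ 𝒩, ∃ A : Set G, S = (V : Set G) * A) → S ∈ w' → S ∈ w := by
    intro w w' hle S ⟨V, hV, A, hSA⟩ hSw'
    have hgen : S ∈ Filter.generate {S : Set G | ∃ V ∈ 𝒩, ∃ A ∈ w', S = (V : Set G) * A} := by
      refine Filter.mem_generate_of_mem ⟨V, hV, S, hSw', ?_⟩
      rw [hSA, aux_VVA]
    have hS : S ∈ Filter.generate {S : Set G | ∃ V ∈ 𝒩, ∃ A ∈ w, S = (V : Set G) * A} :=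
      hle hgen
    rw [Filter.mem_generate_iff] at hS
    obtain ⟨t, hts, htfin, htS⟩ := hS
    have ht : ∀ T ∈ t, T ∈ w := by
      intro T hT
      obtain ⟨W, hW, B, hB, rfl⟩ := hts hT
      exact Filter.mem_of_superset hB (Set.subset_mul_right B W.one_mem)
    exact Filter.mem_of_superset ((Filter.sInter_mem htfin).2 ht) htS
  constructor
  · intro h
    ext S
    simp only [Set.mem_setOf_eq]
    exact ⟨fun ⟨hL, hu⟩ => ⟨hL, key v u h.ge S hL hu⟩,
      fun ⟨hL, hv⟩ => ⟨hL, key u v h.le S hL hv⟩⟩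
  · intro h
    have key2 : ∀ w w' : Ultrafilter G,
        {S : Set G | (∃ V ∈ 𝒩, ∃ A : Set G, S = (V : Set G) * A) ∧ S ∈ w} ⊆
          {S : Set G | (∃ V ∈ 𝒩, ∃ A : Set G, S = (V : Set G) * A) ∧ S ∈ w'} →
        Filter.generate {S : Set G | ∃ V ∈ 𝒩, ∃ A ∈ w', S = (V : Set G) * A} ≤
          Filter.generate {S : Set G | ∃ V ∈ 𝒩, ∃ A ∈ w, S = (V : Set G) * A} := by
      intro w w' hsub
      rw [Filter.le_generate_iff]
      rintro S ⟨V, hV, A, hA, rfl⟩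
      have hmem : (V : Set G) * A ∈ w :=
        Filter.mem_of_superset hA (Set.subset_mul_right A V.one_mem)
      have := hsub ⟨⟨V, hV, A, rfl⟩, hmem⟩
      exact Filter.mem_generate_of_mem ⟨V, hV, (V : Set G) * A, this.2, (aux_VVA V A).symm⟩
    exact le_antisymm (key2 v u h.ge) (key2 u v h.le)
end

section
/- Let G be a group acting on the set of ultrafilters on a G-invariant Boolean algebra 𝒜 of subsets of G (invariant under left translation) by g·u = {g·A : A ∈ u}. If every nonempty element of 𝒜 is syndetic, then the Stone space of 𝒜 with this G-action is a minimal G-flow: for every ultrafilter u on 𝒜 and nonempty A ∈ 𝒜, the set {g ∈ G : A ∈ g·u} is syndetic. -/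
open Pointwise

/-- If `𝒜` is a left-translation-invariant Boolean algebra of subsets of a group
`G` all of whose nonempty members are syndetic, and `u` is an ultrafilter on `𝒜`, then for
every nonempty `A ∈ 𝒜` the set `{g : A ∈ g·u} = {g : g⁻¹·A ∈ u}` is syndetic, i.e. the Stone
space of `𝒜` with the action `g·u = {g·A : A ∈ u}` is a minimal `G`-flow. -/
theorem stmt_7 {G : Type*} [Group G] (𝒜 : Set (Set G))
    (hcompl𝒜 : ∀ A ∈ 𝒜, Aᶜ ∈ 𝒜)
    (hinter𝒜 : ∀ A ∈ 𝒜, ∀ B ∈ 𝒜, A ∩ B ∈ 𝒜)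
    (hinv : ∀ g : G, ∀ A ∈ 𝒜, g • A ∈ 𝒜)
    (hsyn : ∀ A ∈ 𝒜, A.Nonempty → ∃ s : Finset G, ⋃ g ∈ s, g • A = Set.univ)
    (u : Set (Set G)) (hu𝒜 : u ⊆ 𝒜) (huniv : Set.univ ∈ u)
    (hultra : ∀ A ∈ 𝒜, (A ∈ u ↔ Aᶜ ∉ u))
    (hinteru : ∀ A ∈ u, ∀ B ∈ u, A ∩ B ∈ u)
    (hmono : ∀ A ∈ u, ∀ B ∈ 𝒜, A ⊆ B → B ∈ u) :
    ∀ A ∈ 𝒜, A.Nonempty →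
      ∃ s : Finset G, ⋃ g ∈ s, g • {h : G | h⁻¹ • A ∈ u} = Set.univ := by
  have huniv𝒜 : Set.univ ∈ 𝒜 := hu𝒜 huniv
  have hempty : (∅ : Set G) ∉ u := by
    have h := (hultra Set.univ huniv𝒜).mp huniv
    simpa using h
  have hunion𝒜 : ∀ A ∈ 𝒜, ∀ B ∈ 𝒜, A ∪ B ∈ 𝒜 := by
    intro A hA B hB
    have : (Aᶜ ∩ Bᶜ)ᶜ ∈ 𝒜 :=
      hcompl𝒜 _ (hinter𝒜 _ (hcompl𝒜 _ hA) _ (hcompl𝒜 _ hB))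
    simpa [Set.compl_inter] using this
  -- primeness
  have hprime : ∀ A ∈ 𝒜, ∀ B ∈ 𝒜, A ∪ B ∈ u → A ∈ u ∨ B ∈ u := by
    intro A hA B hB hAB
    by_contra h
    push_neg at h
    obtain ⟨hAn, hBn⟩ := h
    have hAc : Aᶜ ∈ u := by
      by_contra hc
      exact hAn ((hultra A hA).mpr hc)
    have hBc : Bᶜ ∈ u := by
      by_contra hc
      exact hBn ((hultra B hB).mpr hc)
    have : Aᶜ ∩ Bᶜ ∈ u := hinteru _ hAc _ hBc
    have h2 : (A ∪ B)ᶜ ∈ u := by rwa [Set.compl_union]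
    exact ((hultra _ (hunion𝒜 _ hA _ hB)).mp hAB) h2
  classical
  have hU𝒜 : ∀ s : Finset G, ∀ f : G → Set G, (∀ g ∈ s, f g ∈ 𝒜) →
      (⋃ g ∈ s, f g) ∈ 𝒜 := by
    intro s
    induction s using Finset.induction_on with
    | empty => intro f _; simpa using hcompl𝒜 _ huniv𝒜
    | insert a t hx ih =>
      intro f hf
      rw [Finset.set_biUnion_insert]
      exact hunion𝒜 _ (hf a (by simp)) _ (ih f (fun g hg => hf g (by simp [hg])))
  have hfin : ∀ s : Finset G, ∀ f : G → Set G, (∀ g ∈ s, f g ∈ 𝒜) →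
      (⋃ g ∈ s, f g) ∈ u → ∃ g ∈ s, f g ∈ u := by
    intro s
    induction s using Finset.induction_on with
    | empty => intro f _ h; simp at h; exact absurd h hempty
    | insert a t hx ih =>
      intro f hf h
      rw [Finset.set_biUnion_insert] at h
      rcases hprime _ (hf a (by simp)) _ (hU𝒜 t f (fun g hg => hf g (by simp [hg]))) h with h1 | h2
      · exact ⟨a, by simp, h1⟩
      · obtain ⟨g, hg, hgu⟩ := ih f (fun g hg => hf g (by simp [hg])) h2
        exact ⟨g, by simp [hg], hgu⟩
  intro A hA hAne
  obtain ⟨s, hs⟩ := hsyn A hA hAne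
  refine ⟨s, ?_⟩
  ext h
  simp only [Set.mem_iUnion, Set.mem_univ, iff_true]
  have hcov : (⋃ g ∈ s, (h⁻¹ * g) • A) ∈ u := by
    have : (⋃ g ∈ s, (h⁻¹ * g) • A) = h⁻¹ • ⋃ g ∈ s, g • A := by
      simp_rw [Set.smul_set_iUnion₂, mul_smul]
    rw [this, hs]
    simpa using huniv
  obtain ⟨g, hg, hgu⟩ := hfin s (fun g => (h⁻¹ * g) • A)
    (fun g _ => hinv _ _ hA) hcov
  refine ⟨g, hg, ?_⟩
  rw [Set.mem_smul_set_iff_inv_smul_mem]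
  simp only [Set.mem_setOf_eq]
  simpa [smul_eq_mul, mul_inv_rev] using hgu
end

section
/- Let G be an extremely amenable topological group, A a set on which G acts transitively with open stabilizers, and c : A → {1,…,k} a coloring. Consider the induced continuous action of G on the compact space {1,…,k}^A by (g·x)(a) = x(g⁻¹·a), and let Y be the orbit closure of c. Then any G-fixed point d in Y is a constant function, and consequently for every finite subset H ⊆ A there exist g ∈ G and i ∈ {1,…,k} such that c(g·a) = i for all a ∈ H. -/
/-- Let `G` be an extremely amenable topological group acting transitively with
open stabilizers on a set `A`, and let `c : A → Fin k` be a coloring, `k ≥ 1`. Consider the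
induced action of `G` on `(Fin k)^A` given by `(g·x)(a) = x(g⁻¹·a)` and the orbit closure `Y`
of `c`. Then every `G`-fixed point `d ∈ Y` is constant, and consequently for every finite
`H ⊆ A` there are `g ∈ G` and a color `i` with `c(g·a) = i` for all `a ∈ H`. -/
theorem stmt_19 {G A : Type u} [Group G] [TopologicalSpace G] [IsTopologicalGroup G]
    [MulAction G A]
    (htrans : ∀ a b : A, ∃ g : G, g • a = b)
    (hopen : ∀ a : A, IsOpen {g : G | g • a = a})
    (k : ℕ) (hk : 0 < k) (c : A → Fin k)
    (hEA : ∀ (X : Type u) [TopologicalSpace X] [CompactSpace X] [T2Space X] [Nonempty X]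
        [MulAction G X], ContinuousSMul G X → ∃ x : X, ∀ g : G, g • x = x) :
    letI : TopologicalSpace (Fin k) := ⊥
    (∀ d : A → Fin k,
        d ∈ closure {x : A → Fin k | ∃ g : G, x = fun a => c (g⁻¹ • a)} →
        (∀ g : G, (fun a => d (g⁻¹ • a)) = d) →
        ∃ i : Fin k, ∀ a : A, d a = i) ∧
    (∀ H : Finset A, ∃ g : G, ∃ i : Fin k, ∀ a ∈ H, c (g • a) = i) := by
  letI : TopologicalSpace (Fin k) := ⊥
  haveI : DiscreteTopology (Fin k) := ⟨rfl⟩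
  have part1 : ∀ d : A → Fin k,
      d ∈ closure {x : A → Fin k | ∃ g : G, x = fun a => c (g⁻¹ • a)} →
      (∀ g : G, (fun a => d (g⁻¹ • a)) = d) →
      ∃ i : Fin k, ∀ a : A, d a = i := by
    intro d _ hfix
    cases isEmpty_or_nonempty A with
    | inl h => exact ⟨⟨0, hk⟩, fun a => (h.false a).elim⟩
    | inr h =>
      obtain ⟨a₀⟩ := h
      refine ⟨d a₀, fun a => ?_⟩
      obtain ⟨g, hg⟩ := htrans a₀ a
      have h2 := congrFun (hfix g) a
      rw [← h2, ← hg, inv_smul_smul]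
  refine ⟨part1, fun H => ?_⟩
  set S : Set (A → Fin k) := {x | ∃ g : G, x = fun a => c (g⁻¹ • a)} with hS
  -- invariance of closure S
  have hσcont : ∀ g : G, Continuous (fun (x : A → Fin k) (a : A) => x (g⁻¹ • a)) :=
    fun g => continuous_pi fun a => continuous_apply (g⁻¹ • a)
  have hSinv : ∀ (g : G) (x : A → Fin k), x ∈ S → (fun a => x (g⁻¹ • a)) ∈ S := by
    rintro g x ⟨h, rfl⟩
    exact ⟨g * h, by funext a; simp [mul_smul]⟩
  have hinv : ∀ (g : G) (x : A → Fin k), x ∈ closure S →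
      (fun a => x (g⁻¹ • a)) ∈ closure S := by
    intro g x hx
    exact map_mem_closure (hσcont g) hx (hSinv g)
  letI : SMul G {x // x ∈ closure S} :=
    ⟨fun g y => ⟨fun a => y.1 (g⁻¹ • a), hinv g y.1 y.2⟩⟩
  letI : MulAction G {x // x ∈ closure S} :=
    { one_smul := by
        intro y
        refine Subtype.ext (funext fun a => ?_)
        show y.1 ((1 : G)⁻¹ • a) = y.1 a
        simp
      mul_smul := by
        intro g h y
        refine Subtype.ext (funext fun a => ?_)
        show y.1 ((g * h)⁻¹ • a) = y.1 (h⁻¹ • g⁻¹ • a)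
        rw [mul_inv_rev, mul_smul] }
  haveI : CompactSpace {x // x ∈ closure S} :=
    isCompact_iff_compactSpace.mp (isClosed_closure.isCompact)
  haveI : Nonempty {x // x ∈ closure S} :=
    ⟨⟨c, subset_closure ⟨1, by funext a; simp⟩⟩⟩
  -- joint continuity
  have hΦ : Continuous (fun p : G × (A → Fin k) => fun a => p.2 (p.1⁻¹ • a)) := by
    refine continuous_pi fun a => ?_
    rw [continuous_iff_continuousAt]
    intro p
    rw [ContinuousAt, nhds_discrete (Fin k), Filter.tendsto_pure]
    have hU : IsOpen {g : G | g⁻¹ • a = p.1⁻¹ • a} := by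
      have h1 : Continuous (fun g : G => g⁻¹ * p.1) := continuous_inv.mul continuous_const
      have h2 := (hopen (p.1⁻¹ • a)).preimage h1
      convert h2 using 1
      ext g
      simp only [Set.mem_setOf_eq, Set.mem_preimage, mul_smul, smul_inv_smul]
    have hV : IsOpen {x : A → Fin k | x (p.1⁻¹ • a) = p.2 (p.1⁻¹ • a)} := by
      have hs : IsOpen ({p.2 (p.1⁻¹ • a)} : Set (Fin k)) := isOpen_discrete _
      have hc : Continuous (fun x : A → Fin k => x (p.1⁻¹ • a)) := continuous_apply _
      exact IsOpen.preimage hc hs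
    have hopen' : IsOpen ({g : G | g⁻¹ • a = p.1⁻¹ • a} ×ˢ
        {x : A → Fin k | x (p.1⁻¹ • a) = p.2 (p.1⁻¹ • a)}) := hU.prod hV
    refine Filter.mem_of_superset (hopen'.mem_nhds ⟨rfl, rfl⟩) ?_
    rintro ⟨g, x⟩ ⟨h1, h2⟩
    show x (g⁻¹ • a) = p.2 (p.1⁻¹ • a)
    rw [show g⁻¹ • a = p.1⁻¹ • a from h1]
    exact h2
  haveI : ContinuousSMul G {x // x ∈ closure S} := by
    constructor
    refine Continuous.subtype_mk ?_ _
    have : Continuous (fun p : G × {x // x ∈ closure S} => (p.1, p.2.1)) :=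
      continuous_fst.prodMk (continuous_subtype_val.comp continuous_snd)
    exact hΦ.comp this
  obtain ⟨y, hy⟩ := hEA {x // x ∈ closure S}
    ⟨by exact (inferInstance : ContinuousSMul G {x // x ∈ closure S}).continuous_smul⟩
  have hfix : ∀ g : G, (fun a => y.1 (g⁻¹ • a)) = y.1 :=
    fun g => congrArg Subtype.val (hy g)
  obtain ⟨i, hi⟩ := part1 y.1 y.2 hfix
  -- finite approximation
  have hW : IsOpen (⋂ a ∈ H, {x : A → Fin k | x a = i}) := by
    refine isOpen_biInter_finset fun a _ => ?_
    have hs : IsOpen ({i} : Set (Fin k)) := isOpen_discrete _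
    have hc : Continuous (fun x : A → Fin k => x a) := continuous_apply _
    exact IsOpen.preimage hc hs
  have hdW : y.1 ∈ ⋂ a ∈ H, {x : A → Fin k | x a = i} := by
    simp only [Set.mem_iInter, Set.mem_setOf_eq]
    exact fun a _ => hi a
  obtain ⟨x, hx1, hx2⟩ := mem_closure_iff.mp y.2 _ hW hdW
  obtain ⟨g, rfl⟩ := hx2
  refine ⟨g⁻¹, i, fun a ha => ?_⟩
  have := Set.mem_iInter.mp hx1 a
  have := Set.mem_iInter.mp this ha
  simpa using this
end
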